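/- Linear loss bound: for all real A > 0 and B ≥ A/4 + 1/A and all n ≥ 1, L_{nΛξ} ≤ (A+1) L_{nΛμ} + (B+1) H_n. -/

import Mathlib

open Finset Filter

/-- A probability distribution on finite binary strings:
nonnegative, `1` on the empty string, and additive under one-symbol extension. -/
def IsDistr (ρ : List Bool → ℝ) : Prop :=
  (∀ x, 0 ≤ ρ x) ∧ ρ [] = 1 ∧
    ∀ x, ρ x = ρ (x ++ [false]) + ρ (x ++ [true])

/-- Conditional probability `ρ(b | x) = ρ(xb)/ρ(x)` (junk `0` when `ρ x = 0`). -/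
noncomputable def condP (ρ : List Bool → ℝ) (x : List Bool) (b : Bool) : ℝ :=
  ρ (x ++ [b]) / ρ x

/-- Instantaneous relative entropy
`h_t(x) = ∑_b μ(b|x) ln (μ(b|x)/ξ(b|x))` (conventions `0·ln 0 = 0` are automatic
since `Real.log 0 = 0` and `r/0 = 0`). -/
noncomputable def instEnt (μ ξ : List Bool → ℝ) (x : List Bool) : ℝ :=
  ∑ b : Bool, condP μ x b * Real.log (condP μ x b / condP ξ x b)

/-- Total relative entropy `H_n = ∑_{t=1}^n ∑_{x_{<t}} μ(x_{<t}) h_t(x_{<t})`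
(histories of length `t-1`, i.e. length `t ∈ {0,…,n-1}`). -/
noncomputable def totalEnt (μ ξ : List Bool → ℝ) (n : ℕ) : ℝ :=
  ∑ t ∈ Finset.range n, ∑ x : Fin t → Bool,
    μ (List.ofFn x) * instEnt μ ξ (List.ofFn x)

/-- `ρ`-expected loss of predicting `y` after history `x`. -/
noncomputable def expLoss (ρ : List Bool → ℝ) (l : Bool → Bool → ℝ)
    (x : List Bool) (y : Bool) : ℝ :=
  ∑ b : Bool, condP ρ x b * l b y

/-- `Y` is a fixed choice of minimizers for the scheme `Λ_ρ`. -/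
def IsPredictor (ρ : List Bool → ℝ) (l : Bool → Bool → ℝ)
    (Y : List Bool → Bool) : Prop :=
  ∀ x y, expLoss ρ l x (Y x) ≤ expLoss ρ l x y

/-- Total `μ`-expected loss `L_{nΛ}` of the scheme with minimizers `Y`. -/
noncomputable def totalLoss (μ : List Bool → ℝ) (l : Bool → Bool → ℝ)
    (Y : List Bool → Bool) (n : ℕ) : ℝ :=
  ∑ t ∈ Finset.range n, ∑ x : Fin t → Bool,
    μ (List.ofFn x) * expLoss μ l (List.ofFn x) (Y (List.ofFn x))


set_option maxHeartbeats 1600000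

section AuxLossBound

noncomputable def klB (y z : ℝ) : ℝ :=
  y * Real.log (y / z) + (1 - y) * Real.log ((1 - y) / (1 - z))

lemma klB_flip (y z : ℝ) : klB (1 - y) (1 - z) = klB y z := by
  rw [klB, klB, show (1:ℝ) - (1 - y) = y by ring, show (1:ℝ) - (1 - z) = z by ring]
  ring

lemma klB_one (z : ℝ) : klB 1 z = -Real.log z := by
  rw [klB, one_div, Real.log_inv]
  ring

lemma klB_zero (z : ℝ) : klB 0 z = -Real.log (1 - z) := by
  rw [klB, show (1:ℝ) - 0 = 1 by ring, one_div, Real.log_inv]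
  ring

lemma klB_zz : klB (0:ℝ) 0 = 0 := by
  rw [klB]; norm_num

lemma klB_oo : klB (1:ℝ) 1 = 0 := by
  rw [klB]; norm_num

lemma klB_def (y z : ℝ) : klB y z
    = y * Real.log (y / z) + (1 - y) * Real.log ((1 - y) / (1 - z)) := rfl
/-- helper: `f y ≤ f z` when `f` has nonpositive derivative on `[z,y]`. -/
lemma le_of_deriv_nonpos {z y : ℝ} (hzy : z ≤ y) {f F : ℝ → ℝ}
    (hd : ∀ t ∈ Set.Icc z y, HasDerivAt f (F t) t)
    (hneg : ∀ t ∈ Set.Ioo z y, F t ≤ 0) : f y ≤ f z := by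
  have h := antitoneOn_of_deriv_nonpos (convex_Icc z y)
    (fun t ht => (hd t ht).continuousAt.continuousWithinAt)
    (by
      rw [interior_Icc]
      exact fun t ht =>
        ((hd t (Set.Ioo_subset_Icc_self ht)).differentiableAt).differentiableWithinAt)
    (by
      rw [interior_Icc]
      intro t ht
      rw [(hd t (Set.Ioo_subset_Icc_self ht)).deriv]
      exact hneg t ht)
  exact h (Set.left_mem_Icc.2 hzy) (Set.right_mem_Icc.2 hzy) hzy

lemma hasDerivAt_klpart (y t : ℝ) (ht0 : t ≠ 0) (ht1 : (1:ℝ) - t ≠ 0) :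
    HasDerivAt (fun t =>
        y * (Real.log y - Real.log t) + (1 - y) * (Real.log (1 - y) - Real.log (1 - t)))
      (-(y / t) + (1 - y) / (1 - t)) t := by
  have h1 : HasDerivAt (fun t : ℝ => Real.log t) t⁻¹ t := Real.hasDerivAt_log ht0
  have h2 : HasDerivAt (fun t : ℝ => (1:ℝ) - t) (-1) t := (hasDerivAt_id t).const_sub 1
  have h3 : HasDerivAt (fun t : ℝ => Real.log (1 - t)) (-1 / (1 - t)) t := h2.log ht1
  have h4 := ((hasDerivAt_const t (Real.log y)).sub h1).const_mul y
  have h5 := ((hasDerivAt_const t (Real.log (1 - y))).sub h3).const_mul (1 - y)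
  have h6 := h4.add h5
  refine h6.congr_deriv ?_
  ring

/-- `2(1-z)² ≤ -log z` for `0 < z ≤ 1`. -/
lemma neglog1 {z : ℝ} (hz0 : 0 < z) (hz1 : z ≤ 1) : 2 * (1 - z) ^ 2 ≤ -Real.log z := by
  have key : ∀ t ∈ Set.Icc z 1, HasDerivAt (fun t => -Real.log t - 2 * (1 - t) ^ 2)
      (-t⁻¹ - 2 * (2 * (1 - t) ^ 1 * (-1))) t := by
    intro t ht
    have ht0 : t ≠ 0 := by nlinarith [ht.1]
    exact ((Real.hasDerivAt_log ht0).neg).sub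
      ((((hasDerivAt_id t).const_sub 1).pow 2).const_mul 2)
  have h := le_of_deriv_nonpos hz1 key (fun t ht => by
    have ht0 : 0 < t := lt_of_lt_of_le hz0 ht.1.le
    have ht1 : t ≤ 1 := ht.2.le
    have e : -t⁻¹ - 2 * (2 * (1 - t) ^ 1 * (-1)) = (4 * t * (1 - t) - 1) / t := by
      field_simp; ring
    rw [e]
    apply div_nonpos_of_nonpos_of_nonneg _ ht0.le
    nlinarith [sq_nonneg (2 * t - 1)])
  simp only [Real.log_one] at h
  nlinarith [h]

/-- `(1-z) ≤ 2z·(-log z)` for `1/2 ≤ z ≤ 1`. -/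
lemma neglog2 {z : ℝ} (hz0 : 1 / 2 ≤ z) (hz1 : z ≤ 1) : 1 - z ≤ 2 * z * (-Real.log z) := by
  have key : ∀ t ∈ Set.Icc z 1, HasDerivAt (fun t => -Real.log t - (2 * t)⁻¹)
      (-t⁻¹ - (-(2 * 1) / (2 * t) ^ 2)) t := by
    intro t ht
    have ht0 : t ≠ 0 := by nlinarith [ht.1]
    have h2t : (2 : ℝ) * t ≠ 0 := by simpa using ht0
    exact ((Real.hasDerivAt_log ht0).neg).sub (((hasDerivAt_id t).const_mul 2).inv h2t)
  have h := le_of_deriv_nonpos hz1 key (fun t ht => by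
    have ht0 : (0:ℝ) < t := by linarith [ht.1]
    have ht2 : 1 / 2 ≤ t := le_trans hz0 ht.1.le
    have e : -t⁻¹ - (-(2 * 1) / (2 * t) ^ 2) = (1 - 2 * t) / (2 * t ^ 2) := by
      field_simp; ring
    rw [e]
    apply div_nonpos_of_nonpos_of_nonneg (by linarith) (by positivity))
  simp only [Real.log_one] at h
  have hz0' : (0:ℝ) < z := by linarith
  have : -Real.log z - (2 * z)⁻¹ ≥ -0 - (2 * 1)⁻¹ := by exact_mod_cast h
  rw [ge_iff_le, neg_zero, zero_sub] at this
  have h2z : (0:ℝ) < 2 * z := by linarith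
  rw [← sub_nonneg]
  have expand : 2 * z * (-Real.log z) - (1 - z) ≥ 2 * z * ((2*z)⁻¹ - (2*1)⁻¹) - (1 - z) := by
    nlinarith [this]
  have : 2 * z * ((2*z)⁻¹ - (2*1)⁻¹) - (1 - z) = 0 := by field_simp; ring
  linarith [expand, this]

/-- Pinsker for Bernoulli, `z < y` side. -/
lemma K1 {y z : ℝ} (hz0 : 0 < z) (hzy : z < y) (hy1 : y ≤ 1) :
    2 * (y - z) ^ 2 ≤ klB y z := by
  rcases eq_or_lt_of_le hy1 with hy | hy
  · subst hy
    rw [klB_one]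
    exact neglog1 hz0 hzy.le
  · have hy0 : 0 < y := hz0.trans hzy
    have hz1 : z < 1 := hzy.trans hy
    have hd : ∀ t ∈ Set.Icc z y, HasDerivAt
        (fun t => y * (Real.log y - Real.log t) +
          (1 - y) * (Real.log (1 - y) - Real.log (1 - t)) - 2 * (y - t) ^ 2)
        ((y - t) * (4 * t * (1 - t) - 1) / (t * (1 - t))) t := by
      intro t ht
      have ht0 : 0 < t := lt_of_lt_of_le hz0 ht.1
      have ht1 : t < 1 := lt_of_le_of_lt ht.2 hy
      have := (hasDerivAt_klpart y t ht0.ne' (by linarith)).sub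
        ((((hasDerivAt_id t).const_sub y).pow 2).const_mul 2)
      have hne1 : t ≠ 0 := ht0.ne'
      have hne2 : (1:ℝ) - t ≠ 0 := by linarith
      refine this.congr_deriv ?_
      simp only [id]
      field_simp
      ring
    have hneg : ∀ t ∈ Set.Ioo z y, (y - t) * (4 * t * (1 - t) - 1) / (t * (1 - t)) ≤ 0 := by
      intro t ht
      have ht0 : 0 < t := hz0.trans ht.1
      have ht1 : t < 1 := ht.2.trans hy
      apply div_nonpos_of_nonpos_of_nonneg _ (by nlinarith : (0:ℝ) ≤ t * (1 - t))
      have h1 : (0:ℝ) ≤ y - t := by linarith [ht.2]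
      have h2 : 4 * t * (1 - t) - 1 ≤ 0 := by nlinarith [sq_nonneg (2 * t - 1)]
      exact mul_nonpos_of_nonneg_of_nonpos h1 h2
    have h := le_of_deriv_nonpos hzy.le hd hneg
    have hfy : y * (Real.log y - Real.log y) +
        (1 - y) * (Real.log (1 - y) - Real.log (1 - y)) - 2 * (y - y) ^ 2 = 0 := by
      ring
    have ekl : klB y z = y * (Real.log y - Real.log z) +
        (1 - y) * (Real.log (1 - y) - Real.log (1 - z)) := by
      rw [klB, Real.log_div hy0.ne' hz0.ne',
        Real.log_div (by linarith) (by linarith)]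
    rw [hfy] at h
    linarith [h]

/-- `(y-z)² ≤ 2z(1-z)·klB y z` for `1/2 ≤ z < y ≤ 1`. -/
lemma K2 {y z : ℝ} (hz : 1 / 2 ≤ z) (hzy : z < y) (hy1 : y ≤ 1) :
    (y - z) ^ 2 ≤ 2 * z * (1 - z) * klB y z := by
  have hz0 : 0 < z := by linarith
  have hz1 : z < 1 := lt_of_lt_of_le hzy hy1
  rcases eq_or_lt_of_le hy1 with hy | hy
  · subst hy
    rw [klB_one]
    nlinarith [mul_le_mul_of_nonneg_left (neglog2 hz hz1.le)
      (by linarith : (0:ℝ) ≤ 1 - z)]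
  · have hy0 : 0 < y := hz0.trans hzy
    have hd : ∀ t ∈ Set.Icc z y, HasDerivAt
        (fun t => y * (Real.log y - Real.log t) +
          (1 - y) * (Real.log (1 - y) - Real.log (1 - t)) - (y - t) ^ 2 / (2 * t - 2 * t ^ 2))
        ((y - t) ^ 2 * (1 - 2 * t) / (2 * t ^ 2 * (1 - t) ^ 2)) t := by
      intro t ht
      have ht0 : 0 < t := lt_of_lt_of_le hz0 ht.1
      have ht1 : t < 1 := lt_of_le_of_lt ht.2 hy
      have hv : HasDerivAt (fun t : ℝ => 2 * t - 2 * t ^ 2) (2 * 1 - 2 * (2 * t ^ 1 * 1)) t :=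
        ((hasDerivAt_id t).const_mul 2).sub (((hasDerivAt_id t).pow 2).const_mul 2)
      have hvne : 2 * t - 2 * t ^ 2 ≠ 0 := by nlinarith
      have hu : HasDerivAt (fun t : ℝ => (y - t) ^ 2) (2 * (y - t) ^ 1 * (-1)) t :=
        ((hasDerivAt_id t).const_sub y).pow 2
      have := (hasDerivAt_klpart y t ht0.ne' (by linarith)).sub (hu.div hv hvne)
      have hne1 : t ≠ 0 := ht0.ne'
      have hne2 : (1:ℝ) - t ≠ 0 := by linarith
      refine this.congr_deriv ?_
      field_simp
      ring
    have hneg : ∀ t ∈ Set.Ioo z y,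
        (y - t) ^ 2 * (1 - 2 * t) / (2 * t ^ 2 * (1 - t) ^ 2) ≤ 0 := by
      intro t ht
      have ht2 : 1 / 2 ≤ t := le_trans hz ht.1.le
      have ht1 : t < 1 := ht.2.trans hy
      apply div_nonpos_of_nonpos_of_nonneg _ (by positivity)
      exact mul_nonpos_of_nonneg_of_nonpos (sq_nonneg _) (by linarith)
    have h := le_of_deriv_nonpos hzy.le hd hneg
    have hfy : y * (Real.log y - Real.log y) +
        (1 - y) * (Real.log (1 - y) - Real.log (1 - y)) - (y - y) ^ 2 / (2 * y - 2 * y ^ 2)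
        = 0 := by
      simp
    have ekl : klB y z = y * (Real.log y - Real.log z) +
        (1 - y) * (Real.log (1 - y) - Real.log (1 - z)) := by
      rw [klB, Real.log_div hy0.ne' hz0.ne', Real.log_div (by linarith) (by linarith)]
    rw [hfy] at h
    have hpos : 0 < 2 * z - 2 * z ^ 2 := by nlinarith
    rw [le_sub_iff_add_le, zero_add, div_le_iff₀ hpos] at h
    nlinarith [h]

/-- `(y-z)² ≤ 2y(1-y)·klB y z` for `0 < z < y ≤ 1/2`. -/
lemma K3 {y z : ℝ} (hz0 : 0 < z) (hzy : z < y) (hy : y ≤ 1 / 2) :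
    (y - z) ^ 2 ≤ 2 * y * (1 - y) * klB y z := by
  have hy0 : 0 < y := hz0.trans hzy
  have hy1 : y < 1 := by linarith
  have hdenom : (0:ℝ) < 2 * y - 2 * y ^ 2 := by nlinarith
  have hd : ∀ t ∈ Set.Icc z y, HasDerivAt
      (fun t => y * (Real.log y - Real.log t) +
        (1 - y) * (Real.log (1 - y) - Real.log (1 - t)) - (y - t) ^ 2 / (2 * y - 2 * y ^ 2))
      ((y - t) * (t * (1 - t) - y * (1 - y)) / (t * (1 - t) * (y * (1 - y)))) t := by
    intro t ht
    have ht0 : 0 < t := lt_of_lt_of_le hz0 ht.1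
    have ht1 : t < 1 := lt_of_le_of_lt ht.2 hy1
    have hu : HasDerivAt (fun t : ℝ => (y - t) ^ 2) (2 * (y - t) ^ 1 * (-1)) t :=
      ((hasDerivAt_id t).const_sub y).pow 2
    have := (hasDerivAt_klpart y t ht0.ne' (by linarith)).sub
      (hu.div_const (2 * y - 2 * y ^ 2))
    have hne1 : t ≠ 0 := ht0.ne'
    have hne2 : (1:ℝ) - t ≠ 0 := by linarith
    have hne3 : y ≠ 0 := hy0.ne'
    have hne4 : (1:ℝ) - y ≠ 0 := by linarith
    have hne5 : 2 * y - 2 * y ^ 2 ≠ 0 := hdenom.ne'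
    refine this.congr_deriv ?_
    field_simp
    ring
  have hneg : ∀ t ∈ Set.Ioo z y,
      (y - t) * (t * (1 - t) - y * (1 - y)) / (t * (1 - t) * (y * (1 - y))) ≤ 0 := by
    intro t ht
    have ht0 : 0 < t := hz0.trans ht.1
    have ht1 : t < 1 := by linarith [ht.2]
    apply div_nonpos_of_nonpos_of_nonneg _
      (by nlinarith [mul_pos ht0 (by linarith : (0:ℝ) < 1 - t),
        mul_pos hy0 (by linarith : (0:ℝ) < 1 - y)] : (0:ℝ) ≤ t * (1 - t) * (y * (1 - y)))
    apply mul_nonpos_of_nonneg_of_nonpos (by linarith [ht.2])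
    nlinarith [ht.2]
  have h := le_of_deriv_nonpos hzy.le hd hneg
  have hfy : y * (Real.log y - Real.log y) +
      (1 - y) * (Real.log (1 - y) - Real.log (1 - y)) - (y - y) ^ 2 / (2 * y - 2 * y ^ 2)
      = 0 := by
    simp
  have ekl : klB y z = y * (Real.log y - Real.log z) +
      (1 - y) * (Real.log (1 - y) - Real.log (1 - z)) := by
    rw [klB, Real.log_div hy0.ne' hz0.ne', Real.log_div (by linarith) (by linarith)]
  rw [hfy] at h
  have hz1 : z < 1 := by linarith
  rw [le_sub_iff_add_le, zero_add, div_le_iff₀ hdenom] at h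
  nlinarith [h]

/-- nonnegativity of binary KL. -/
lemma K0 {y z : ℝ} (hy0 : 0 ≤ y) (hy1 : y ≤ 1) (hz0 : 0 < z) (hz1 : z < 1) :
    0 ≤ klB y z := by
  rcases eq_or_lt_of_le hy0 with hy | hy
  · rw [← hy, klB_zero]
    nlinarith [Real.log_nonpos (by linarith : (0:ℝ) ≤ 1 - z) (by linarith : (1:ℝ) - z ≤ 1)]
  · rcases eq_or_lt_of_le hy1 with hy' | hy'
    · subst hy'
      rw [klB_one]
      nlinarith [Real.log_nonpos hz0.le hz1.le]
    · have t1 : y - z ≤ y * Real.log (y / z) := by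
        rw [show Real.log (y / z) = -Real.log (z / y) by rw [← Real.log_inv, inv_div]]
        have h1 := Real.log_le_sub_one_of_pos (show (0:ℝ) < z / y by positivity)
        have h2 := mul_le_mul_of_nonneg_left h1 hy0
        have h3 : y * (z / y - 1) = z - y := by field_simp
        nlinarith [h2]
      have t2 : z - y ≤ (1 - y) * Real.log ((1 - y) / (1 - z)) := by
        rw [show Real.log ((1 - y) / (1 - z)) = -Real.log ((1 - z) / (1 - y)) by
          rw [← Real.log_inv, inv_div]]
        have h1 := Real.log_le_sub_one_of_pos (show (0:ℝ) < (1 - z) / (1 - y) by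
          apply div_pos <;> linarith)
        have h2 := mul_le_mul_of_nonneg_left h1 (by linarith : (0:ℝ) ≤ 1 - y)
        have hne : (1:ℝ) - y ≠ 0 := by linarith
        have h3 : (1 - y) * ((1 - z) / (1 - y) - 1) = y - z := by field_simp; ring
        nlinarith [h2]
      rw [klB]
      linarith

/-- master inequality, case `z < y`. -/
lemma corePos {y z m0 m1 s0 s1 : ℝ} (hz0 : 0 < z) (hzy : z < y) (hy1 : y ≤ 1)
    (hm0 : 0 ≤ m0) (hm0' : m0 ≤ 1) (hm1 : 0 ≤ m1) (hs0 : 0 ≤ s0) (hs1 : s1 ≤ 1)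
    (hxi : z * s1 + (1 - z) * s0 ≤ z * m1 + (1 - z) * m0)
    (hr : 0 < y * s1 + (1 - y) * s0 - (y * m1 + (1 - y) * m0)) :
    (y * s1 + (1 - y) * s0 - (y * m1 + (1 - y) * m0)) ^ 2 ≤
      2 * klB y z * ((y * m1 + (1 - y) * m0) + (y * s1 + (1 - y) * s0)) := by
  have hy0 : 0 < y := hz0.trans hzy
  have hz1 : z < 1 := lt_of_lt_of_le hzy hy1
  have hy' : (0:ℝ) ≤ 1 - y := by linarith
  have hz' : (0:ℝ) < 1 - z := by linarith
  obtain ⟨a, ha⟩ : ∃ t : ℝ, t = s1 - m1 := ⟨_, rfl⟩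
  obtain ⟨b, hb⟩ : ∃ t : ℝ, t = s0 - m0 := ⟨_, rfl⟩
  obtain ⟨r, hrdef⟩ : ∃ t : ℝ, t = y * s1 + (1 - y) * s0 - (y * m1 + (1 - y) * m0) := ⟨_, rfl⟩
  obtain ⟨S, hSdef⟩ : ∃ t : ℝ, t = (y * m1 + (1 - y) * m0) + (y * s1 + (1 - y) * s0) := ⟨_, rfl⟩
  obtain ⟨H, hHdef⟩ : ∃ t : ℝ, t = klB y z := ⟨_, rfl⟩
  rw [← hrdef, ← hSdef, ← hHdef]
  rw [← hrdef] at hr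
  have hH : 0 ≤ H := by rw [hHdef]; exact K0 hy0.le hy1 hz0 hz1
  have hxi' : z * a + (1 - z) * b ≤ 0 := by
    have e : z * a + (1 - z) * b = (z * s1 + (1 - z) * s0) - (z * m1 + (1 - z) * m0) := by
      rw [ha, hb]; ring
    linarith [e, hxi]
  have hre : r = y * a + (1 - y) * b := by rw [hrdef, ha, hb]; ring
  have hab : 0 < a - b := by
    by_contra h
    push_neg at h
    have h1 : (y - z) * (a - b) ≤ 0 := mul_nonpos_of_nonneg_of_nonpos (by linarith) h
    have e2 : y * a + (1 - y) * b = (z * a + (1 - z) * b) + (y - z) * (a - b) := by ring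
    linarith [hre, hxi', hr, e2, h1]
  have haPos : 0 < a := by
    by_contra h
    push_neg at h
    have hbneg : b ≤ 0 := by linarith
    have h1 : y * a ≤ 0 := mul_nonpos_of_nonneg_of_nonpos hy0.le h
    have h2 : (1 - y) * b ≤ 0 := mul_nonpos_of_nonneg_of_nonpos hy' hbneg
    linarith [hre, hr, h1, h2]
  have hza : z * a ≤ (1 - z) * m0 := by
    have h1 : 0 ≤ (1 - z) * s0 := mul_nonneg hz'.le hs0
    have e : (1 - z) * b = (1 - z) * s0 - (1 - z) * m0 := by rw [hb]; ring
    linarith [hxi', h1, e]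
  have ha1 : a ≤ 1 := by rw [ha]; linarith
  have hr1 : r * (1 - z) ≤ a * (y - z) := by
    have e : r * (1 - z) - a * (y - z) = (1 - y) * (z * a + (1 - z) * b) := by
      rw [hre]; ring
    have h1 : (1 - y) * (z * a + (1 - z) * b) ≤ 0 :=
      mul_nonpos_of_nonneg_of_nonpos hy' hxi'
    linarith [e, h1]
  have hS : a * (y + z - 2 * y * z) ≤ S * (1 - z) := by
    have t1 : (0:ℝ) ≤ 2 * y * m1 + (1 - y) * s0 := by
      have := mul_nonneg hy0.le hm1
      have := mul_nonneg hy' hs0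
      linarith
    have t2 : (0:ℝ) ≤ (1 - y) * ((1 - z) * m0 - z * a) :=
      mul_nonneg hy' (by linarith [hza])
    have t3 : (0:ℝ) ≤ (2 * y * m1 + (1 - y) * s0) * (1 - z) := mul_nonneg t1 hz'.le
    have e : S * (1 - z) - a * (y + z - 2 * y * z)
        = (2 * y * m1 + (1 - y) * s0) * (1 - z) + (1 - y) * ((1 - z) * m0 - z * a) := by
      rw [hSdef, ha]; ring
    linarith [e, t2, t3]
  have hkey : a * (y - z) ^ 2 ≤ 2 * H * ((y + z - 2 * y * z) * (1 - z)) := by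
    have c1 : a * (y - z) ^ 2 ≤ (y - z) ^ 2 := by
      have := mul_nonneg (by linarith : (0:ℝ) ≤ 1 - a) (sq_nonneg (y - z))
      nlinarith [this]
    rcases le_or_gt z (1 / 2) with hhalf | hhalf
    · rcases le_or_gt y (1 / 2) with hyhalf | hyhalf
      · have h3 : (y - z) ^ 2 ≤ 2 * y * (1 - y) * H := by
          rw [hHdef]; exact K3 hz0 hzy hyhalf
        have poly : y * (1 - y) ≤ (y + z - 2 * y * z) * (1 - z) := by
          nlinarith [sq_nonneg (y - z),
            mul_nonneg (mul_nonneg hz0.le hy') (by linarith : (0:ℝ) ≤ 1 - 2 * z)]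
        have h4 : 2 * H * (y * (1 - y)) ≤ 2 * H * ((y + z - 2 * y * z) * (1 - z)) :=
          mul_le_mul_of_nonneg_left poly (by linarith)
        nlinarith [c1, h3, h4]
      · have h1 : 2 * (y - z) ^ 2 ≤ H := by rw [hHdef]; exact K1 hz0 hzy hy1
        have poly : (1:ℝ) ≤ 4 * ((y + z - 2 * y * z) * (1 - z)) := by
          nlinarith [mul_nonneg (by linarith : (0:ℝ) ≤ y - 1 / 2)
            (by linarith : (0:ℝ) ≤ 1 - 2 * z)]
        have h4 := mul_le_mul_of_nonneg_left poly (by linarith : (0:ℝ) ≤ H / 2)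
        nlinarith [c1, h1, h4]
    · have h2 : (y - z) ^ 2 ≤ 2 * z * (1 - z) * H := by rw [hHdef]; exact K2 hhalf.le hzy hy1
      have haz : a * z ≤ 1 - z := by
        have := mul_le_mul_of_nonneg_left hm0' hz'.le
        nlinarith [hza, this]
      have h5 : 1 - z ≤ y + z - 2 * y * z := by
        nlinarith [mul_nonneg (by linarith : (0:ℝ) ≤ 2 * z - 1) hy']
      have h6 := mul_le_mul_of_nonneg_left h2 haPos.le
      have h7 : 2 * H * (1 - z) * (a * z) ≤ 2 * H * (1 - z) * (y + z - 2 * y * z) :=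
        mul_le_mul_of_nonneg_left (by linarith)
          (mul_nonneg (mul_nonneg (by norm_num) hH) hz'.le)
      nlinarith [h6, h7]
  have e1 : (r * (1 - z)) ^ 2 ≤ (a * (y - z)) ^ 2 :=
    pow_le_pow_left₀ (mul_nonneg hr.le hz'.le) hr1 2
  have e2 : (a * (y - z)) ^ 2 ≤ a * (2 * H * ((y + z - 2 * y * z) * (1 - z))) := by
    have := mul_le_mul_of_nonneg_left hkey haPos.le
    nlinarith [this]
  have e4 : (2 * H * (1 - z)) * (a * (y + z - 2 * y * z))
      ≤ (2 * H * (1 - z)) * (S * (1 - z)) :=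
    mul_le_mul_of_nonneg_left hS (mul_nonneg (mul_nonneg (by norm_num) hH) hz'.le)
  have hfin : r ^ 2 * (1 - z) ^ 2 ≤ (2 * H * S) * (1 - z) ^ 2 := by nlinarith [e1, e2, e4]
  have hsq : (0:ℝ) < (1 - z) ^ 2 := by positivity
  exact (mul_le_mul_iff_left₀ hsq).mp hfin

/-- master inequality `r² ≤ 2·klB·(l_μ + l_ξ)`. -/
lemma coreM {y z m0 m1 s0 s1 : ℝ} (hy0 : 0 ≤ y) (hy1 : y ≤ 1) (hz0 : 0 < z) (hz1 : z < 1)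
    (hm0 : 0 ≤ m0) (hm0' : m0 ≤ 1) (hm1 : 0 ≤ m1) (hm1' : m1 ≤ 1)
    (hs0 : 0 ≤ s0) (hs0' : s0 ≤ 1) (hs1 : 0 ≤ s1) (hs1' : s1 ≤ 1)
    (hxi : z * s1 + (1 - z) * s0 ≤ z * m1 + (1 - z) * m0)
    (hr : 0 < y * s1 + (1 - y) * s0 - (y * m1 + (1 - y) * m0)) :
    (y * s1 + (1 - y) * s0 - (y * m1 + (1 - y) * m0)) ^ 2 ≤
      2 * klB y z * ((y * m1 + (1 - y) * m0) + (y * s1 + (1 - y) * s0)) := by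
  rcases lt_trichotomy z y with h | h | h
  · exact corePos hz0 h hy1 hm0 hm0' hm1 hs0 hs1' hxi hr
  · exfalso
    subst h
    linarith [hxi, hr]
  · have h' := corePos (y := 1 - y) (z := 1 - z) (m0 := m1) (m1 := m0) (s0 := s1) (s1 := s0)
      (by linarith) (by linarith) (by linarith) hm1 hm1' hm0 hs1 hs0'
      (by linarith [hxi]) (by linarith [hr])
    rw [klB_flip] at h'
    nlinarith [h']

/-- per-step loss bound. -/
lemma step {A B y z m0 m1 s0 s1 : ℝ} (hA : 0 < A) (hB : A / 4 + 1 / A ≤ B)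
    (hy0 : 0 ≤ y) (hy1 : y ≤ 1) (hz0 : 0 ≤ z) (hz1 : z ≤ 1)
    (hd1 : 0 < y → 0 < z) (hd2 : y < 1 → z < 1)
    (hm0 : 0 ≤ m0) (hm0' : m0 ≤ 1) (hm1 : 0 ≤ m1) (hm1' : m1 ≤ 1)
    (hs0 : 0 ≤ s0) (hs0' : s0 ≤ 1) (hs1 : 0 ≤ s1) (hs1' : s1 ≤ 1)
    (hmu : y * m1 + (1 - y) * m0 ≤ y * s1 + (1 - y) * s0)
    (hxi : z * s1 + (1 - z) * s0 ≤ z * m1 + (1 - z) * m0) :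
    y * s1 + (1 - y) * s0 ≤
      (A + 1) * (y * m1 + (1 - y) * m0) + (B + 1) * klB y z := by
  have hBpos : 0 < B := by
    have h1 : 0 < A / 4 + 1 / A := by positivity
    linarith
  have hl : 0 ≤ y * m1 + (1 - y) * m0 := by
    have := mul_nonneg hy0 hm1
    have := mul_nonneg (by linarith : (0:ℝ) ≤ 1 - y) hm0
    linarith
  rcases eq_or_lt_of_le hz0 with hz | hz
  · -- z = 0, hence y = 0
    have hy : y = 0 := by
      by_contra h
      have : 0 < y := lt_of_le_of_ne hy0 (Ne.symm h)
      exact absurd (hd1 this) (by rw [← hz]; exact lt_irrefl 0)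
    subst hy
    rw [← hz] at hxi
    rw [← hz, klB_zz]
    have hsm : s0 ≤ m0 := by linarith [hxi]
    nlinarith [hsm, hm0, hA]
  · rcases eq_or_lt_of_le hz1 with hz' | hz'
    · -- z = 1, hence y = 1
      have hy : y = 1 := by
        by_contra h
        have : y < 1 := lt_of_le_of_ne hy1 h
        exact absurd (hd2 this) (by rw [hz']; exact lt_irrefl 1)
      subst hy
      rw [hz', klB_oo]
      have : s1 ≤ m1 := by
        have e1 : z * s1 + (1 - z) * s0 = s1 := by rw [hz']; ring
        have e2 : z * m1 + (1 - z) * m0 = m1 := by rw [hz']; ring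
        linarith [hxi, e1, e2]
      nlinarith [hl]
    · -- 0 < z < 1
      have hH : 0 ≤ klB y z := K0 hy0 hy1 hz hz'
      obtain ⟨r, hrdef⟩ : ∃ t : ℝ, t = y * s1 + (1 - y) * s0 - (y * m1 + (1 - y) * m0) :=
        ⟨_, rfl⟩
      rcases le_or_gt r 0 with hrneg | hrpos
      · have h1 : 0 ≤ (B + 1) * klB y z := mul_nonneg (by linarith) hH
        nlinarith [hl, hrneg, hrdef, h1]
      · have hM := coreM hy0 hy1 hz hz' hm0 hm0' hm1 hm1' hs0 hs0' hs1 hs1' hxi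
          (by rw [← hrdef]; exact hrpos)
        rw [← hrdef] at hM
        obtain ⟨l, hldef⟩ : ∃ t : ℝ, t = y * m1 + (1 - y) * m0 := ⟨_, rfl⟩
        obtain ⟨H, hHdef⟩ : ∃ t : ℝ, t = klB y z := ⟨_, rfl⟩
        rw [← hldef] at hl
        rw [← hHdef] at hH
        have hM' : r ^ 2 ≤ 2 * H * (2 * l + r) := by
          have e : (y * m1 + (1 - y) * m0) + (y * s1 + (1 - y) * s0) = 2 * l + r := by
            rw [hldef, hrdef]; ring
          rw [← hHdef, e] at hM
          exact hM
        -- W := A*l + (A/4 + 1/A)*H ;  (r - H)² ≤ H² + 4Hl ≤ W²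
        obtain ⟨W, hWdef⟩ : ∃ t : ℝ, t = A * l + (A / 4 + 1 / A) * H := ⟨_, rfl⟩
        have hW : 0 ≤ W := by
          rw [hWdef]
          have h1 : 0 ≤ A / 4 + 1 / A := by positivity
          have := mul_nonneg hA.le hl
          have := mul_nonneg h1 hH
          linarith
        have hsq : W ^ 2 = H ^ 2 + 4 * H * l + (A * l + (A / 4 - 1 / A) * H) ^ 2 := by
          rw [hWdef]
          have hAne : A ≠ 0 := hA.ne'
          field_simp
          ring
        have hrW : r - H ≤ W := by
          by_contra hcon
          push_neg at hcon
          have h1 : W < r - H := hcon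
          have h2 : (r - H) ^ 2 ≤ W ^ 2 := by
            nlinarith [hM', hsq, sq_nonneg (A * l + (A / 4 - 1 / A) * H)]
          nlinarith [h1, hW, h2]
        -- conclude
        have hBH : (A / 4 + 1 / A) * H ≤ B * H := mul_le_mul_of_nonneg_right hB hH
        have e2 : y * s1 + (1 - y) * s0 = l + r := by rw [hldef, hrdef]; ring
        rw [e2, ← hldef, ← hHdef]
        rw [hWdef] at hrW
        linarith [hrW, hBH, hH]

end AuxLossBound

/-- linear loss bound, eq. (9): for all `A > 0`,
`B ≥ A/4 + 1/A` and `n ≥ 1`, `L_{nΛξ} ≤ (A+1) L_{nΛμ} + (B+1) H_n`. -/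
theorem linear_loss_bound {ι : Type*} [Countable ι]
    (μs : ι → List Bool → ℝ) (w : ι → ℝ)
    (hμs : ∀ i, IsDistr (μs i)) (hw : ∀ i, 0 < w i) (hw1 : HasSum w 1)
    (ξ : List Bool → ℝ) (hξ : ∀ x, HasSum (fun i => w i * μs i x) (ξ x))
    (i₀ : ι)
    (l : Bool → Bool → ℝ) (hl : ∀ a y, l a y ∈ Set.Icc (0 : ℝ) 1)
    (Yμ Yξ : List Bool → Bool)
    (hYμ : IsPredictor (μs i₀) l Yμ) (hYξ : IsPredictor ξ l Yξ)
    (A B : ℝ) (hA : 0 < A) (hB : A / 4 + 1 / A ≤ B)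
    (n : ℕ) (hn : 1 ≤ n) :
    totalLoss (μs i₀) l Yξ n ≤
      (A + 1) * totalLoss (μs i₀) l Yμ n + (B + 1) * totalEnt (μs i₀) ξ n := by
  set μ : List Bool → ℝ := μs i₀ with hμdef
  have hμnn : ∀ x, 0 ≤ μ x := (hμs i₀).1
  have hμadd : ∀ x, μ x = μ (x ++ [false]) + μ (x ++ [true]) := (hμs i₀).2.2
  have hξnn : ∀ x, 0 ≤ ξ x := fun x =>
    (hξ x).nonneg fun i => mul_nonneg (hw i).le ((hμs i).1 x)
  have hdom : ∀ x, w i₀ * μ x ≤ ξ x := fun x =>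
    le_hasSum (hξ x) i₀ fun i _ => mul_nonneg (hw i).le ((hμs i).1 x)
  have hξadd : ∀ x, ξ x = ξ (x ++ [false]) + ξ (x ++ [true]) := by
    intro x
    have h1 := (hξ (x ++ [false])).add (hξ (x ++ [true]))
    have h2 : (fun i => w i * μs i (x ++ [false]) + w i * μs i (x ++ [true]))
        = fun i => w i * μs i x := funext fun i => by rw [(hμs i).2.2 x]; ring
    rw [h2] at h1
    exact (hξ x).unique h1
  -- per-history inequality
  have key : ∀ x : List Bool,
      μ x * expLoss μ l x (Yξ x) ≤
        (A + 1) * (μ x * expLoss μ l x (Yμ x)) + (B + 1) * (μ x * instEnt μ ξ x) := by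
    intro x
    rcases eq_or_lt_of_le (hμnn x) with hx0 | hx
    · rw [← hx0]
      norm_num
    · have hξx : 0 < ξ x := lt_of_lt_of_le (mul_pos (hw i₀) hx) (hdom x)
      have e1 : condP μ x false = 1 - condP μ x true := by
        rw [condP, condP, eq_sub_iff_add_eq, ← add_div, ← hμadd x,
          div_self hx.ne']
      have e1ξ : condP ξ x false = 1 - condP ξ x true := by
        rw [condP, condP, eq_sub_iff_add_eq, ← add_div, ← hξadd x,
          div_self hξx.ne']
      have hy0 : 0 ≤ condP μ x true := div_nonneg (hμnn _) (hμnn _)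
      have hy1 : condP μ x true ≤ 1 := by
        rw [condP, div_le_one hx]
        linarith [hμadd x, hμnn (x ++ [false])]
      have hz0 : 0 ≤ condP ξ x true := div_nonneg (hξnn _) (hξnn _)
      have hz1 : condP ξ x true ≤ 1 := by
        rw [condP, div_le_one hξx]
        linarith [hξadd x, hξnn (x ++ [false])]
      have hd1 : 0 < condP μ x true → 0 < condP ξ x true := by
        intro h
        rw [condP] at h
        have h1 : 0 < μ (x ++ [true]) := by
          by_contra hc
          push_neg at hc
          have : μ (x ++ [true]) = 0 := le_antisymm hc (hμnn _)
          rw [this] at h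
          simp at h
        have h2 : 0 < ξ (x ++ [true]) :=
          lt_of_lt_of_le (mul_pos (hw i₀) h1) (hdom _)
        exact div_pos h2 hξx
      have hd2 : condP μ x true < 1 → condP ξ x true < 1 := by
        intro h
        have h0 : 0 < condP μ x false := by rw [e1]; linarith
        rw [condP] at h0
        have h1 : 0 < μ (x ++ [false]) := by
          by_contra hc
          push_neg at hc
          have : μ (x ++ [false]) = 0 := le_antisymm hc (hμnn _)
          rw [this] at h0
          simp at h0
        have h2 : 0 < ξ (x ++ [false]) :=
          lt_of_lt_of_le (mul_pos (hw i₀) h1) (hdom _)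
        have h3 : 0 < condP ξ x false := div_pos h2 hξx
        rw [e1ξ] at h3
        linarith
      -- expand sums
      have eL : ∀ c, expLoss μ l x c
          = condP μ x true * l true c + (1 - condP μ x true) * l false c := by
        intro c
        rw [expLoss, Fintype.sum_bool, e1]
      have eLξ : ∀ c, expLoss ξ l x c
          = condP ξ x true * l true c + (1 - condP ξ x true) * l false c := by
        intro c
        rw [expLoss, Fintype.sum_bool, e1ξ]
      have eH : instEnt μ ξ x = klB (condP μ x true) (condP ξ x true) := by
        rw [instEnt, Fintype.sum_bool, e1, e1ξ, klB_def]
      have hmu := hYμ x (Yξ x)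
      have hxi := hYξ x (Yμ x)
      rw [eL, eL] at hmu
      rw [eLξ, eLξ] at hxi
      have hstep := step hA hB hy0 hy1 hz0 hz1 hd1 hd2
        (hl false (Yμ x)).1 (hl false (Yμ x)).2 (hl true (Yμ x)).1 (hl true (Yμ x)).2
        (hl false (Yξ x)).1 (hl false (Yξ x)).2 (hl true (Yξ x)).1 (hl true (Yξ x)).2
        hmu hxi
      rw [eL, eL, eH]
      nlinarith [mul_le_mul_of_nonneg_left hstep hx.le]
  -- sum up
  rw [totalLoss, totalLoss, totalEnt, Finset.mul_sum, Finset.mul_sum,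
    ← Finset.sum_add_distrib]
  apply Finset.sum_le_sum
  intro t _
  rw [Finset.mul_sum, Finset.mul_sum, ← Finset.sum_add_distrib]
  apply Finset.sum_le_sum
  intro v _
  exact key (List.ofFn v)
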